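/- Let K be a field, t ≥ 1 an integer, and let a_1,…,a_{t+1}, a_1',…,a_{t+1}', b_1,…,b_{t+1}, b_1',…,b_{t+1}' ∈ K satisfy a_i ≠ 0 and a_i' ≠ 0 for all i, and a_i a_j' − a_i' a_j ≠ 0 for all i ≠ j. Define d(i,i) := a_i b_i − a_i' b_i' and, for i ≠ j, d(i,j) := (a_i b_j − a_i' b_j')/(a_i/a_j − a_i'/a_j'). Then Σ_{i=1}^t (a_i'/a_{t+1}') · ( −1/(a_i/a_{t+1} − a_i'/a_{t+1}') ) · Π_{j=1}^t d(i,j) = Π_{j=1}^t d(t+1,j) − Π_{i=1}^t a_i' b_i'. -/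

import Mathlib

open scoped BigOperators

/-- `d(i,j)` of the paper: `d(i,i) = a_i b_i - a'_i b'_i` and, for `i ≠ j`,
`d(i,j) = (a_i b_j - a'_i b'_j) / (a_i/a_j - a'_i/a'_j)`. -/
def dFun {K : Type*} [Field K] {s : ℕ} (a a' b b' : Fin s → K) (i j : Fin s) : K :=
  if i = j then a i * b i - a' i * b' i
  else (a i * b j - a' i * b' j) / (a i / a j - a' i / a' j)

section Aux

variable {K : Type*} [Field K]

private lemma keyA (ak ak' bk bk' x : K) (hxk : ak' - x * ak ≠ 0) :
    ak * ak' * (bk - x * bk') / (ak' - x * ak)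
      = ak' * bk' + ak' * (ak * bk - ak' * bk') / (ak' - x * ak) := by
  have h1 : ak' - ak * x ≠ 0 := fun h => hxk (by linear_combination h)
  field_simp
  ring

private lemma keyB (ai ai' ak ak' bk bk' x c : K)
    (hik : ai * ak' - ai' * ak ≠ 0)
    (hki : ai' * ak - ak' * ai ≠ 0)
    (hxi : ai' - x * ai ≠ 0) (hxk : ak' - x * ak ≠ 0) :
    (ak * ak' * (bk - x * bk') / (ak' - x * ak)) * (ai' * c / (ai' - x * ai))
      = ai' * ((ai * bk - ai' * bk') * (ak * ak') / (ai * ak' - ai' * ak) * c) / (ai' - x * ai)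
        + ak' * ((ak * bk - ak' * bk') * (ai' * c * ak / (ai' * ak - ak' * ai))) / (ak' - x * ak) := by
  have h1 : ak' - ak * x ≠ 0 := fun h => hxk (by linear_combination h)
  have h2 : ak' * ai - ak * ai' ≠ 0 := fun h => hik (by linear_combination h)
  have h3 : ak * ai' - ak' * ai ≠ 0 := fun h => hik (by linear_combination -h)
  have h4 : ai' - ai * x ≠ 0 := fun h => hxi (by linear_combination h)
  field_simp
  ring

private lemma keyC (aj aj' bj bj' ak ak' : K)
    (hak : ak ≠ 0)
    (hkj : ak * aj' - ak' * aj ≠ 0) :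
    aj * aj' * (bj - ak' / ak * bj') / (aj' - ak' / ak * aj)
      = (ak * bj - ak' * bj') * (aj * aj') / (ak * aj' - ak' * aj) := by
  have hD1 : aj' - ak' / ak * aj ≠ 0 := by
    rw [show aj' - ak' / ak * aj = (aj' * ak - ak' * aj) / ak by field_simp]
    exact div_ne_zero (fun h => hkj (by linear_combination h)) hak
  rw [div_eq_div_iff hD1 hkj]
  field_simp

private lemma keyD (ai ai' aL aL' c : K)
    (haL : aL ≠ 0) (haL' : aL' ≠ 0)
    (hiL : ai * aL' - ai' * aL ≠ 0) :
    (ai' / aL') * (-(ai / aL - ai' / aL')⁻¹) * c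
      = ai' * c / (ai' - aL' / aL * ai) := by
  have hD1 : ai' - aL' / aL * ai ≠ 0 := by
    rw [show ai' - aL' / aL * ai = (ai' * aL - aL' * ai) / aL by field_simp]
    exact div_ne_zero (fun h => hiL (by linear_combination -h)) haL
  have h2 : ai * aL' - aL * ai' ≠ 0 := fun h => hiL (by linear_combination h)
  rw [div_sub_div _ _ haL haL', inv_div, eq_div_iff hD1]
  have h3 : aL' * ai - ai' * aL ≠ 0 := fun h => hiL (by linear_combination h)
  field_simp
  ring

private lemma keyE (u u' v v' p : K) (hv : v ≠ 0) (hv' : v' ≠ 0) :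
    p / (u / v - u' / v') = p * (v * v') / (u * v' - u' * v) := by
  rw [div_sub_div _ _ hv hv', div_div_eq_mul_div]
  congr 1
  ring

private lemma keyF (ai ai' ak ak' c : K) (hak : ak ≠ 0) :
    ai' * c / (ai' - ak' / ak * ai) = ai' * c * ak / (ai' * ak - ak' * ai) := by
  rw [show ai' - ak' / ak * ai = (ai' * ak - ak' * ai) / ak by field_simp,
    div_div_eq_mul_div]

/-- The partial-fraction identity
`∏_{j∈s} g_j(x) = ∏_{j∈s} a'_j b'_j + ∑_{i∈s} a'_i (∏_{j∈s} d(i,j)) / (a'_i - x a_i)`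
where `g_j(x) = a_j a'_j (b_j - x b'_j)/(a'_j - x a_j)`. -/
private lemma mainPF {n : ℕ} (a a' b b' : Fin n → K) (s : Finset (Fin n)) :
    (∀ i ∈ s, a i ≠ 0) → (∀ i ∈ s, a' i ≠ 0) →
    (∀ i ∈ s, ∀ j ∈ s, i ≠ j → a i * a' j - a' i * a j ≠ 0) →
    ∀ x : K, (∀ i ∈ s, a' i - x * a i ≠ 0) →
    ∏ j ∈ s, (a j * a' j * (b j - x * b' j) / (a' j - x * a j))
      = ∏ j ∈ s, (a' j * b' j)
        + ∑ i ∈ s, a' i * (∏ j ∈ s, dFun a a' b b' i j) / (a' i - x * a i) := by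
  induction s using Finset.induction_on with
  | empty => simp
  | @insert k s hk ih =>
    intro ha ha' hnd x hx
    have hak : a k ≠ 0 := ha k (Finset.mem_insert_self k s)
    have hak' : a' k ≠ 0 := ha' k (Finset.mem_insert_self k s)
    have ha_s : ∀ i ∈ s, a i ≠ 0 := fun i hi => ha i (Finset.mem_insert_of_mem hi)
    have ha'_s : ∀ i ∈ s, a' i ≠ 0 := fun i hi => ha' i (Finset.mem_insert_of_mem hi)
    have hnd_s : ∀ i ∈ s, ∀ j ∈ s, i ≠ j → a i * a' j - a' i * a j ≠ 0 :=
      fun i hi j hj hij => hnd i (Finset.mem_insert_of_mem hi) j (Finset.mem_insert_of_mem hj) hij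
    have hne : ∀ i ∈ s, i ≠ k := fun i hi h => hk (h ▸ hi)
    have hxk : a' k - x * a k ≠ 0 := hx k (Finset.mem_insert_self k s)
    have hx_s : ∀ i ∈ s, a' i - x * a i ≠ 0 := fun i hi => hx i (Finset.mem_insert_of_mem hi)
    have IH := ih ha_s ha'_s hnd_s
    -- nondegeneracy between i ∈ s and k
    have hik : ∀ i ∈ s, a i * a' k - a' i * a k ≠ 0 := fun i hi =>
      hnd i (Finset.mem_insert_of_mem hi) k (Finset.mem_insert_self k s) (hne i hi)
    have hki : ∀ i ∈ s, a' i * a k - a' k * a i ≠ 0 := fun i hi h =>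
      hik i hi (by linear_combination -h)
    have hki' : ∀ i ∈ s, a k * a' i - a' k * a i ≠ 0 := fun i hi h =>
      hik i hi (by linear_combination -h)
    -- x_k := a' k / a k is admissible for s
    have hxk_s : ∀ i ∈ s, a' i - a' k / a k * a i ≠ 0 := by
      intro i hi
      rw [show a' i - a' k / a k * a i = (a' i * a k - a' k * a i) / a k by field_simp]
      exact div_ne_zero (hki i hi) hak
    -- the product of g_j at x_k equals ∏ d(k,j)
    have hprod_k : ∏ j ∈ s, (a j * a' j * (b j - a' k / a k * b' j) / (a' j - a' k / a k * a j))
        = ∏ j ∈ s, dFun a a' b b' k j := by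
      refine Finset.prod_congr rfl fun j hj => ?_
      rw [keyC (a j) (a' j) (b j) (b' j) (a k) (a' k) hak (hki' j hj),
        dFun, if_neg (hne j hj).symm,
        keyE (a k) (a' k) (a j) (a' j) _ (ha_s j hj) (ha'_s j hj)]
    have hDk : ∏ j ∈ s, dFun a a' b b' k j
        = ∏ j ∈ s, (a' j * b' j)
          + ∑ i ∈ s, a' i * (∏ j ∈ s, dFun a a' b b' i j) / (a' i - a' k / a k * a i) :=
      hprod_k ▸ IH (a' k / a k) hxk_s
    -- expand products and sums over `insert k s`
    simp only [Finset.prod_insert hk, Finset.sum_insert hk]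
    rw [IH x hx_s]
    rw [show dFun a a' b b' k k = a k * b k - a' k * b' k from if_pos rfl]
    rw [hDk]
    -- clear nested divisions in the two sums
    have hS : ∑ i ∈ s, a' i * (∏ j ∈ s, dFun a a' b b' i j) / (a' i - a' k / a k * a i)
        = ∑ i ∈ s, a' i * (∏ j ∈ s, dFun a a' b b' i j) * a k / (a' i * a k - a' k * a i) :=
      Finset.sum_congr rfl fun i _ => keyF _ _ _ _ _ hak
    have hR : ∑ i ∈ s, a' i * (dFun a a' b b' i k * ∏ j ∈ s, dFun a a' b b' i j)
            / (a' i - x * a i)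
        = ∑ i ∈ s, a' i * ((a i * b k - a' i * b' k) * (a k * a' k) / (a i * a' k - a' i * a k)
            * ∏ j ∈ s, dFun a a' b b' i j) / (a' i - x * a i) := by
      refine Finset.sum_congr rfl fun i hi => ?_
      rw [dFun, if_neg (hne i hi),
        keyE (a i) (a' i) (a k) (a' k) _ hak hak']
    rw [hS, hR]
    -- expand the left-hand side and rewrite termwise with keyB
    rw [mul_add, Finset.mul_sum]
    have hL : ∑ i ∈ s,
          (a k * a' k * (b k - x * b' k) / (a' k - x * a k))
            * (a' i * (∏ j ∈ s, dFun a a' b b' i j) / (a' i - x * a i))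
        = ∑ i ∈ s,
            (a' i * ((a i * b k - a' i * b' k) * (a k * a' k) / (a i * a' k - a' i * a k)
                * ∏ j ∈ s, dFun a a' b b' i j) / (a' i - x * a i)
              + a' k * ((a k * b k - a' k * b' k)
                  * (a' i * (∏ j ∈ s, dFun a a' b b' i j) * a k / (a' i * a k - a' k * a i)))
                / (a' k - x * a k)) :=
      Finset.sum_congr rfl fun i hi =>
        keyB (a i) (a' i) (a k) (a' k) (b k) (b' k) x _ (hik i hi) (hki i hi) (hx_s i hi) hxk
    rw [hL, Finset.sum_add_distrib, ← Finset.sum_div, ← Finset.mul_sum, ← Finset.mul_sum]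
    rw [keyA (a k) (a' k) (b k) (b' k) x hxk]
    ring

end Aux

/-- the inductive-step identity, with indices `1, …, t` realized as
`Fin.castSucc i` for `i : Fin t` and the index `t+1` realized as `Fin.last t`:
`∑_{i=1}^t (a'_i/a'_{t+1}) · (-1/(a_i/a_{t+1} - a'_i/a'_{t+1})) · ∏_{j=1}^t d(i,j)
  = ∏_{j=1}^t d(t+1,j) - ∏_{i=1}^t a'_i b'_i`. -/
theorem dFun_sum_identity {K : Type*} [Field K] (t : ℕ) (ht : 1 ≤ t)
    (a a' b b' : Fin (t + 1) → K)
    (ha : ∀ i, a i ≠ 0) (ha' : ∀ i, a' i ≠ 0)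
    (hnd : ∀ i j : Fin (t + 1), i ≠ j → a i * a' j - a' i * a j ≠ 0) :
    ∑ i : Fin t,
        (a' i.castSucc / a' (Fin.last t))
          * (-(a i.castSucc / a (Fin.last t) - a' i.castSucc / a' (Fin.last t))⁻¹)
          * ∏ j : Fin t, dFun a a' b b' i.castSucc j.castSucc
      = ∏ j : Fin t, dFun a a' b b' (Fin.last t) j.castSucc
        - ∏ i : Fin t, a' i.castSucc * b' i.castSucc := by
  set L : Fin (t + 1) := Fin.last t with hL
  set s : Finset (Fin (t + 1)) := Finset.image Fin.castSucc Finset.univ with hs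
  have hinj : ∀ x ∈ (Finset.univ : Finset (Fin t)), ∀ y ∈ Finset.univ,
      Fin.castSucc x = Fin.castSucc y → x = y :=
    fun x _ y _ h => Fin.castSucc_injective t h
  have hmem : ∀ i ∈ s, i ≠ L := by
    intro i hi
    rcases Finset.mem_image.mp hi with ⟨i₀, _, rfl⟩
    exact (Fin.castSucc_lt_last i₀).ne
  have hiL : ∀ i ∈ s, a i * a' L - a' i * a L ≠ 0 := fun i hi => hnd i L (hmem i hi)
  have hxL : ∀ i ∈ s, a' i - a' L / a L * a i ≠ 0 := by
    intro i hi
    rw [show a' i - a' L / a L * a i = (a' i * a L - a' L * a i) / a L by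
      field_simp [ha L]]
    exact div_ne_zero (fun h => hiL i hi (by linear_combination -h)) (ha L)
  have hmain := mainPF a a' b b' s (fun i _ => ha i) (fun i _ => ha' i)
    (fun i _ j _ hij => hnd i j hij) (a' L / a L) hxL
  -- LHS of the theorem as a sum over s
  have hLHS : ∑ i : Fin t,
        (a' i.castSucc / a' L) * (-(a i.castSucc / a L - a' i.castSucc / a' L)⁻¹)
          * ∏ j : Fin t, dFun a a' b b' i.castSucc j.castSucc
      = ∑ i ∈ s, a' i * (∏ j ∈ s, dFun a a' b b' i j) / (a' i - a' L / a L * a i) := by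
    rw [hs, Finset.sum_image hinj]
    refine Finset.sum_congr rfl fun i₀ _ => ?_
    rw [Finset.prod_image hinj,
      keyD (a i₀.castSucc) (a' i₀.castSucc) (a L) (a' L) _ (ha L) (ha' L)
        (hnd i₀.castSucc L (Fin.castSucc_lt_last i₀).ne)]
  -- product of g_j at a' L / a L equals ∏ d(L, j)
  have hprod_L : ∏ j ∈ s, (a j * a' j * (b j - a' L / a L * b' j) / (a' j - a' L / a L * a j))
      = ∏ j : Fin t, dFun a a' b b' L j.castSucc := by
    rw [hs, Finset.prod_image hinj]
    refine Finset.prod_congr rfl fun j₀ _ => ?_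
    have hLj : a L * a' j₀.castSucc - a' L * a j₀.castSucc ≠ 0 :=
      hnd L j₀.castSucc (Fin.castSucc_lt_last j₀).ne'
    rw [keyC (a j₀.castSucc) (a' j₀.castSucc) (b j₀.castSucc) (b' j₀.castSucc) (a L) (a' L)
        (ha L) hLj,
      dFun, if_neg (Fin.castSucc_lt_last j₀).ne',
      keyE (a L) (a' L) (a j₀.castSucc) (a' j₀.castSucc) _ (ha j₀.castSucc) (ha' j₀.castSucc)]
  have hPb : ∏ j ∈ s, (a' j * b' j) = ∏ i : Fin t, a' i.castSucc * b' i.castSucc := by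
    rw [hs, Finset.prod_image hinj]
  rw [hLHS, ← hPb, eq_sub_iff_add_eq, add_comm, ← hprod_L, ← hmain]
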